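/- arXiv:1912.10348 — 5 statements merged into one kernel-verified Lean document; each statement's English description precedes it below -/
import Mathlib

section
/- Let H be an n-dimensional complex Hilbert space, R : H → H a linear map, I = {1,...,m}, K = {0,...,k} with k ≥ n-1, and f_1,...,f_m ∈ H. If the family {R^j f_i : i ∈ I, j ∈ K} is a frame of H with frame bounds A, B > 0, then for every eigenvalue λ of the adjoint R*, the family {P_{E_λ} f_i : i ∈ I} is a frame of E_λ = ker(R* - λI) with frame bounds A/C_λ and B/C_λ, where C_λ = Σ_{j=0}^{k} |λ|^{2j} and P_{E_λ} is the orthogonal projection onto E_λ. -/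
open scoped InnerProductSpace
open Finset

/-- If the iterates `{R^j f_i : i ∈ I, j ∈ K}` form a frame of the
`n`-dimensional Hilbert space `H` with bounds `A, B`, then for every eigenvalue `λ` of `R*`,
the projections `{P_{E_λ} f_i}` form a frame of `E_λ = ker(R* - λI)` with bounds
`A/C_λ` and `B/C_λ`, where `C_λ = Σ_{j=0}^k |λ|^{2j}`. -/
theorem stmt0 {H : Type*} [NormedAddCommGroup H] [InnerProductSpace ℂ H]
    [FiniteDimensional ℂ H] (n m k : ℕ) (hn : Module.finrank ℂ H = n)
    (hk : n - 1 ≤ k) (R : H →ₗ[ℂ] H) (f : Fin m → H) (A B : ℝ)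
    (hA : 0 < A) (hB : 0 < B)
    (hframe : ∀ x : H,
      A * ‖x‖ ^ 2 ≤ ∑ j ∈ Finset.range (k + 1), ∑ i : Fin m,
          ‖⟪x, (R ^ j) (f i)⟫_ℂ‖ ^ 2 ∧
        ∑ j ∈ Finset.range (k + 1), ∑ i : Fin m, ‖⟪x, (R ^ j) (f i)⟫_ℂ‖ ^ 2
          ≤ B * ‖x‖ ^ 2) :
    ∀ lam : ℂ, Module.End.HasEigenvalue (LinearMap.adjoint R) lam →
      ∀ x ∈ LinearMap.ker (LinearMap.adjoint R - lam • LinearMap.id),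
        A / (∑ j ∈ Finset.range (k + 1), ‖lam‖ ^ (2 * j)) * ‖x‖ ^ 2 ≤
            ∑ i : Fin m, ‖⟪x, ((Submodule.orthogonalProjectionOnto
              (LinearMap.ker (LinearMap.adjoint R - lam • LinearMap.id)) (f i)) : H)⟫_ℂ‖ ^ 2 ∧
          ∑ i : Fin m, ‖⟪x, ((Submodule.orthogonalProjectionOnto
              (LinearMap.ker (LinearMap.adjoint R - lam • LinearMap.id)) (f i)) : H)⟫_ℂ‖ ^ 2
            ≤ B / (∑ j ∈ Finset.range (k + 1), ‖lam‖ ^ (2 * j)) * ‖x‖ ^ 2 := by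
  intro lam _ x hx
  set E := LinearMap.ker (LinearMap.adjoint R - lam • LinearMap.id) with hE
  have hxE : x ∈ E := hx
  have hRx : (LinearMap.adjoint R) x = lam • x := by
    have := (LinearMap.mem_ker).mp hx
    simp only [LinearMap.sub_apply, LinearMap.smul_apply, LinearMap.id_apply, sub_eq_zero] at this
    exact this
  set C : ℝ := ∑ j ∈ Finset.range (k + 1), ‖lam‖ ^ (2 * j) with hC
  have hC1 : (1:ℝ) ≤ C := by
    rw [hC]
    calc (1:ℝ) = ‖lam‖ ^ (2 * 0) := by simp
    _ ≤ _ := Finset.single_le_sum (f := fun j => ‖lam‖ ^ (2 * j))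
        (fun j _ => by positivity) (Finset.mem_range.mpr (Nat.succ_pos k))
  have hCpos : 0 < C := lt_of_lt_of_le one_pos hC1
  -- inner product with iterates
  have key : ∀ j, ∀ y : H, ⟪x, (R ^ j) y⟫_ℂ = (starRingEnd ℂ lam) ^ j * ⟪x, y⟫_ℂ := by
    intro j
    induction j with
    | zero => intro y; simp
    | succ j ih =>
      intro y
      have : (R ^ (j+1)) y = (R ^ j) (R y) := by
        rw [pow_succ]; rfl
      rw [this, ih (R y)]
      have : ⟪x, R y⟫_ℂ = (starRingEnd ℂ lam) * ⟪x, y⟫_ℂ := by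
        rw [← LinearMap.adjoint_inner_left, hRx, inner_smul_left]
      rw [this]; ring
  -- projection equality
  have hproj : ∀ i, ⟪x, ((Submodule.orthogonalProjectionOnto E (f i)) : H)⟫_ℂ = ⟪x, f i⟫_ℂ := by
    intro i
    have h0 : ⟪f i - (Submodule.orthogonalProjectionOnto E (f i) : H), x⟫_ℂ = 0 :=
      E.starProjection_inner_eq_zero (f i) x hxE
    have : ⟪x, f i - (Submodule.orthogonalProjectionOnto E (f i) : H)⟫_ℂ = 0 := by
      rw [← inner_conj_symm, h0, map_zero]
    rw [inner_sub_right, sub_eq_zero] at this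
    exact this.symm
  set S : ℝ := ∑ i : Fin m, ‖⟪x, ((Submodule.orthogonalProjectionOnto E (f i)) : H)⟫_ℂ‖ ^ 2 with hS
  have hsum : ∑ j ∈ Finset.range (k + 1), ∑ i : Fin m, ‖⟪x, (R ^ j) (f i)⟫_ℂ‖ ^ 2
      = C * S := by
    rw [hC, hS, Finset.sum_mul]
    refine Finset.sum_congr rfl fun j _ => ?_
    rw [Finset.mul_sum]
    refine Finset.sum_congr rfl fun i _ => ?_
    rw [key j (f i), hproj i]
    rw [norm_mul, mul_pow, norm_pow, Complex.norm_conj, ← pow_mul,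
      mul_comm j 2]
  obtain ⟨h1, h2⟩ := hframe x
  rw [hsum] at h1 h2
  constructor
  · rw [div_mul_eq_mul_div, div_le_iff₀ hCpos]
    calc A * ‖x‖ ^ 2 ≤ C * S := h1
    _ = S * C := mul_comm _ _
  · rw [div_mul_eq_mul_div, le_div_iff₀ hCpos]
    calc S * C = C * S := mul_comm _ _
    _ ≤ B * ‖x‖ ^ 2 := h2
end

section
/- Let λ_1,...,λ_r be distinct complex numbers with β = max_s |λ_s|, α = min_s Π_{u≠s} |λ_s-λ_u|². For k ≥ r-1, let M : ℂ^{m×r} → P_k^m be the Lagrange interpolation operator sending (w_{is})_{i,s} to the tuple of polynomials (p_i)_i of degree ≤ r-1 with p_i(λ_s) = w_{is}. Then ‖M‖ ≤ ((r/α) Σ_{u=0}^{r-1} binom(r-1, u)² β^{2u})^{1/2}, where P_k carries the coefficient inner product. -/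
open Finset Polynomial

private lemma coeff_prod_bound {ι : Type*} [DecidableEq ι] (β : ℝ) (hβ : 0 ≤ β) (f : ι → ℂ)
    (D : Finset ι) (hf : ∀ u ∈ D, ‖f u‖ ≤ β) (j : ℕ) :
    ‖(∏ u ∈ D, (X - C (f u))).coeff j‖
      ≤ (D.card.choose j : ℝ) * β ^ (D.card - j) := by
  induction D using Finset.induction_on generalizing j with
  | empty =>
    rcases j with _ | j <;> simp [Polynomial.coeff_one]
  | @insert a D ha ih =>
    have hfa : ‖f a‖ ≤ β := hf a (mem_insert_self _ _)
    have ihD : ∀ j, ‖(∏ u ∈ D, (X - C (f u))).coeff j‖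
        ≤ (D.card.choose j : ℝ) * β ^ (D.card - j) :=
      fun j => ih (fun u hu => hf u (mem_insert_of_mem hu)) j
    set P : Polynomial ℂ := ∏ u ∈ D, (X - C (f u)) with hP
    set n := D.card with hn
    rw [Finset.prod_insert ha, Finset.card_insert_of_notMem ha, sub_mul]
    rcases j with _ | j
    · rw [coeff_sub, coeff_X_mul_zero, coeff_C_mul, zero_sub, norm_neg, norm_mul]
      have h1 : ‖P.coeff 0‖ ≤ β ^ n := by
        simpa using ihD 0
      calc ‖f a‖ * ‖P.coeff 0‖ ≤ β * β ^ n :=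
            mul_le_mul hfa h1 (by positivity) hβ
        _ = ((n + 1).choose 0 : ℝ) * β ^ (n + 1 - 0) := by
            rw [Nat.choose_zero_right]; push_cast; ring
    · rw [coeff_sub, coeff_X_mul, coeff_C_mul]
      have tri : ‖P.coeff j - f a * P.coeff (j + 1)‖
          ≤ ‖P.coeff j‖ + ‖f a * P.coeff (j + 1)‖ :=
        norm_sub_le _ _
      have h2 : ‖f a * P.coeff (j + 1)‖
          ≤ β * ((n.choose (j + 1) : ℝ) * β ^ (n - (j + 1))) := by
        rw [norm_mul]
        exact mul_le_mul hfa (ihD (j + 1)) (by positivity) hβ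
      have h3 : β * ((n.choose (j + 1) : ℝ) * β ^ (n - (j + 1)))
          ≤ (n.choose (j + 1) : ℝ) * β ^ (n - j) := by
        rcases le_or_gt (j + 1) n with h | h
        · have : n - (j + 1) + 1 = n - j := by omega
          rw [← this, pow_succ]
          ring_nf
          exact le_rfl
        · rw [Nat.choose_eq_zero_of_lt h]
          simp
      have key : ‖P.coeff j - f a * P.coeff (j + 1)‖
          ≤ (n.choose j : ℝ) * β ^ (n - j) + (n.choose (j + 1) : ℝ) * β ^ (n - j) :=
        tri.trans (add_le_add (ihD j) (h2.trans h3))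
      have hc : ((n + 1).choose (j + 1) : ℝ) = (n.choose j : ℝ) + (n.choose (j + 1) : ℝ) := by
        rw [Nat.choose_succ_succ]; push_cast; ring
      have he : n + 1 - (j + 1) = n - j := by omega
      rw [hc, he, add_mul]
      exact key

/-- For distinct `λ_1,…,λ_r` with `β = max_s |λ_s|` and
`α = min_s Π_{u≠s}|λ_s-λ_u|²`, and `k ≥ r-1`, the Lagrange interpolation operator
`M : ℂ^{m×r} → P_k^m`, `M(w)_i = Σ_s w_{is} B_s` (so that `M(w)_i(λ_s) = w_{is}`),
satisfies `‖M‖ ≤ ((r/α) Σ_{u=0}^{r-1} binom(r-1,u)² β^{2u})^{1/2}`.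
`P_k^m` with the coefficient inner product is modelled as
`EuclideanSpace ℂ (Fin m × Fin (k+1))`. -/
theorem stmt5 (r m k : ℕ) (hr : 0 < r) (hk : r - 1 ≤ k)
    (lam : Fin r → ℂ) (hlam : Function.Injective lam)
    (α β : ℝ)
    (hα : IsLeast
      (Set.range fun s : Fin r => ∏ u ∈ Finset.univ.erase s, ‖lam s - lam u‖ ^ 2) α)
    (hβ : IsGreatest (Set.range fun s : Fin r => ‖lam s‖) β)
    (M : EuclideanSpace ℂ (Fin m × Fin r) →L[ℂ] EuclideanSpace ℂ (Fin m × Fin (k + 1)))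
    (hM : ∀ (w : EuclideanSpace ℂ (Fin m × Fin r)) (i : Fin m) (j : Fin (k + 1)),
      M w (i, j) = ∑ s : Fin r, w (i, s) *
        (∏ u ∈ Finset.univ.erase s,
          (Polynomial.C (lam s - lam u)⁻¹ * (Polynomial.X - Polynomial.C (lam u)))).coeff
            (j : ℕ)) :
    ‖M‖ ≤ Real.sqrt ((r / α) *
      ∑ u ∈ Finset.range r, ((r - 1).choose u : ℝ) ^ 2 * β ^ (2 * u)) := by
  classical
  set n := r - 1 with hn
  have hrn : n + 1 = r := by omega
  -- basic facts about α and β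
  have hβ0 : 0 ≤ β := by
    obtain ⟨s0, hs0⟩ := hβ.1
    rw [← hs0]; positivity
  have hβs : ∀ s : Fin r, ‖lam s‖ ≤ β := fun s => hβ.2 ⟨s, rfl⟩
  have hαs : ∀ s : Fin r,
      α ≤ ∏ u ∈ Finset.univ.erase s, ‖lam s - lam u‖ ^ 2 :=
    fun s => hα.2 ⟨s, rfl⟩
  have hprodpos : ∀ s : Fin r,
      0 < ∏ u ∈ Finset.univ.erase s, ‖lam s - lam u‖ ^ 2 := by
    intro s
    apply Finset.prod_pos
    intro u hu
    have hne : lam s ≠ lam u := fun h => (Finset.mem_erase.mp hu).1 (hlam h).symm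
    have h0 : lam s - lam u ≠ 0 := sub_ne_zero_of_ne hne
    exact pow_pos (norm_pos_iff.mpr h0) 2
  have hα0 : 0 < α := by
    obtain ⟨s0, hs0⟩ := hα.1
    rw [← hs0]; exact hprodpos s0
  -- the coefficient function
  set c : Fin r → ℕ → ℝ := fun s j =>
    ‖(∏ u ∈ Finset.univ.erase s,
      (C (lam s - lam u)⁻¹ * (X - C (lam u)))).coeff j‖ with hc
  have hcard : ∀ s : Fin r, (Finset.univ.erase s).card = n := by
    intro s
    rw [Finset.card_erase_of_mem (Finset.mem_univ s), Finset.card_univ, Fintype.card_fin]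
  -- split c into the constant and the monic product
  have hcsplit : ∀ s j, c s j =
      (∏ u ∈ Finset.univ.erase s, ‖lam s - lam u‖)⁻¹ *
        ‖(∏ u ∈ Finset.univ.erase s, (X - C (lam u))).coeff j‖ := by
    intro s j
    rw [hc]
    simp only
    rw [Finset.prod_mul_distrib, ← map_prod, coeff_C_mul, norm_mul, norm_prod]
    congr 1
    rw [← Finset.prod_inv_distrib]
    exact Finset.prod_congr rfl fun u _ => norm_inv _
  set S : ℝ := ∑ u ∈ Finset.range r, ((r - 1).choose u : ℝ) ^ 2 * β ^ (2 * u) with hS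
  have hS0 : 0 ≤ S := by
    apply Finset.sum_nonneg
    intro u _
    positivity
  -- per-s bound on the sum of squared coefficients
  have key : ∀ s : Fin r, ∑ j ∈ Finset.range (k + 1), (c s j) ^ 2 ≤ α⁻¹ * S := by
    intro s
    have hinv : ((∏ u ∈ Finset.univ.erase s, ‖lam s - lam u‖)⁻¹) ^ 2 ≤ α⁻¹ := by
      rw [inv_pow, ← Finset.prod_pow]
      exact inv_anti₀ hα0 (hαs s)
    have hcoeff : ∀ j : ℕ,
        ‖(∏ u ∈ Finset.univ.erase s, (X - C (lam u))).coeff j‖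
          ≤ (n.choose j : ℝ) * β ^ (n - j) := by
      intro j
      have := coeff_prod_bound β hβ0 lam (Finset.univ.erase s)
        (fun u _ => hβs u) j
      rwa [hcard s] at this
    have step1 : ∀ j : ℕ, (c s j) ^ 2
        ≤ α⁻¹ * ((n.choose j : ℝ) * β ^ (n - j)) ^ 2 := by
      intro j
      rw [hcsplit s j, mul_pow]
      apply mul_le_mul hinv _ (by positivity) (by positivity)
      exact pow_le_pow_left₀ (by positivity) (hcoeff j) 2
    calc ∑ j ∈ Finset.range (k + 1), (c s j) ^ 2
        ≤ ∑ j ∈ Finset.range (k + 1), α⁻¹ * ((n.choose j : ℝ) * β ^ (n - j)) ^ 2 :=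
          Finset.sum_le_sum fun j _ => step1 j
      _ = α⁻¹ * ∑ j ∈ Finset.range (k + 1), ((n.choose j : ℝ) * β ^ (n - j)) ^ 2 := by
          rw [Finset.mul_sum]
      _ = α⁻¹ * ∑ j ∈ Finset.range (n + 1), ((n.choose j : ℝ) * β ^ (n - j)) ^ 2 := by
          congr 1
          refine (Finset.sum_subset (Finset.range_subset_range.mpr (by omega)) ?_).symm
          intro j _ hj
          rw [Finset.mem_range, not_lt] at hj
          rw [Nat.choose_eq_zero_of_lt (by omega)]
          simp
      _ = α⁻¹ * S := by
          congr 1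
          rw [hS, ← hrn]
          rw [← Finset.sum_range_reflect
            (fun j => ((n.choose j : ℝ) * β ^ (n - j)) ^ 2) (n + 1)]
          refine Finset.sum_congr rfl fun j hj => ?_
          rw [Finset.mem_range] at hj
          have hjn : j ≤ n := by omega
          have h1 : n + 1 - 1 - j = n - j := by omega
          have h2 : n - (n - j) = j := Nat.sub_sub_self hjn
          have h3 : n.choose (n - j) = n.choose j := Nat.choose_symm hjn
          rw [h1, h2, h3, mul_pow, ← pow_mul, Nat.mul_comm]
          simp
  -- main estimate
  apply ContinuousLinearMap.opNorm_le_bound _ (Real.sqrt_nonneg _)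
  intro w
  have hCS : ∀ (i : Fin m) (j : Fin (k + 1)), ‖M w (i, j)‖ ^ 2
      ≤ (∑ s : Fin r, ‖w (i, s)‖ ^ 2) * (∑ s : Fin r, (c s (j : ℕ)) ^ 2) := by
    intro i j
    have htri : ‖M w (i, j)‖ ≤ ∑ s : Fin r, ‖w (i, s)‖ * c s (j : ℕ) := by
      rw [hM w i j]
      refine (norm_sum_le _ _).trans ?_
      refine Finset.sum_le_sum fun s _ => le_of_eq ?_
      simp [hc, norm_mul]
    calc ‖M w (i, j)‖ ^ 2 ≤ (∑ s : Fin r, ‖w (i, s)‖ * c s (j : ℕ)) ^ 2 :=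
          pow_le_pow_left₀ (norm_nonneg _) htri 2
      _ ≤ (∑ s : Fin r, ‖w (i, s)‖ ^ 2) * (∑ s : Fin r, (c s (j : ℕ)) ^ 2) :=
          Finset.sum_mul_sq_le_sq_mul_sq _ _ _
  have hsum : ∑ p : Fin m × Fin (k + 1), ‖M w p‖ ^ 2
      ≤ ‖w‖ ^ 2 * ((r / α) * S) := by
    have hw2 : ∑ i : Fin m, ∑ s : Fin r, ‖w (i, s)‖ ^ 2 = ‖w‖ ^ 2 := by
      rw [EuclideanSpace.norm_eq, Real.sq_sqrt (by positivity)]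
      rw [Fintype.sum_prod_type]
    have hB : ∑ j : Fin (k + 1), ∑ s : Fin r, (c s (j : ℕ)) ^ 2 ≤ (r / α) * S := by
      rw [Finset.sum_comm]
      calc ∑ s : Fin r, ∑ j : Fin (k + 1), (c s (j : ℕ)) ^ 2
          = ∑ s : Fin r, ∑ j ∈ Finset.range (k + 1), (c s j) ^ 2 := by
            refine Finset.sum_congr rfl fun s _ => ?_
            exact Fin.sum_univ_eq_sum_range (fun j => (c s j) ^ 2) (k + 1)
        _ ≤ ∑ _s : Fin r, α⁻¹ * S := Finset.sum_le_sum fun s _ => key s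
        _ = (r / α) * S := by
            rw [Finset.sum_const, Finset.card_univ, Fintype.card_fin, nsmul_eq_mul]
            field_simp
    calc ∑ p : Fin m × Fin (k + 1), ‖M w p‖ ^ 2
        = ∑ i : Fin m, ∑ j : Fin (k + 1), ‖M w (i, j)‖ ^ 2 := by rw [Fintype.sum_prod_type]
      _ ≤ ∑ i : Fin m, ∑ j : Fin (k + 1),
            (∑ s : Fin r, ‖w (i, s)‖ ^ 2) * (∑ s : Fin r, (c s (j : ℕ)) ^ 2) :=
          Finset.sum_le_sum fun i _ => Finset.sum_le_sum fun j _ => hCS i j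
      _ = (∑ i : Fin m, ∑ s : Fin r, ‖w (i, s)‖ ^ 2) *
            (∑ j : Fin (k + 1), ∑ s : Fin r, (c s (j : ℕ)) ^ 2) := by
          rw [← Finset.sum_mul_sum]
      _ ≤ ‖w‖ ^ 2 * ((r / α) * S) := by
          rw [hw2]
          exact mul_le_mul_of_nonneg_left hB (by positivity)
  rw [EuclideanSpace.norm_eq]
  calc Real.sqrt (∑ p : Fin m × Fin (k + 1), ‖M w p‖ ^ 2)
      ≤ Real.sqrt (‖w‖ ^ 2 * ((r / α) * S)) := Real.sqrt_le_sqrt hsum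
    _ = Real.sqrt ((r / α) * S) * ‖w‖ := by
        rw [mul_comm, Real.sqrt_mul (by positivity), Real.sqrt_sq (norm_nonneg _)]
end

section
/- Let λ_1,...,λ_r be distinct complex numbers with β = max_s |λ_s| and α = min_s Π_{u≠s} |λ_s-λ_u|². Then each Lagrange basis polynomial B_s(z) = Π_{u≠s} (z-λ_u)/(λ_s-λ_u) satisfies ‖B_s‖² ≤ (1/α)(1+β)^{2r}, where ‖·‖ is the coefficient ℓ² norm on polynomials, and consequently the Lagrange interpolation operator M : ℂ^{m×r} → P_k^m satisfies ‖M‖ ≤ (r/α)^{1/2} (1+β)^r. -/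
open Finset Polynomial

lemma coeff_abs_mul_le {p q : ℂ[X]} {P Q : ℝ[X]}
    (hp : ∀ i, ‖ (p.coeff i)‖ ≤ P.coeff i)
    (hq : ∀ i, ‖ (q.coeff i)‖ ≤ Q.coeff i) (n : ℕ) :
    ‖ ((p * q).coeff n)‖ ≤ (P * Q).coeff n := by
  rw [coeff_mul, coeff_mul]
  refine (norm_sum_le _ _).trans (Finset.sum_le_sum fun x _ => ?_)
  rw [norm_mul]
  exact mul_le_mul (hp _) (hq _) (norm_nonneg _) ((norm_nonneg _).trans (hp _))

lemma coeff_abs_prod_le {ι : Type*} [DecidableEq ι] (t : Finset ι) (f : ι → ℂ) :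
    ∀ n, ‖ ((∏ u ∈ t, (X - C (f u))).coeff n)‖ ≤
      (∏ u ∈ t, (X + C (‖ (f u)‖))).coeff n := by
  induction t using Finset.induction with
  | empty =>
    intro n
    simp only [Finset.prod_empty, coeff_one]
    split_ifs <;> simp
  | @insert a t ha ih =>
    intro n
    rw [Finset.prod_insert ha, Finset.prod_insert ha]
    refine coeff_abs_mul_le ?_ ih n
    intro i
    match i with
    | 0 => simp
    | 1 => simp
    | (j+2) => simp [coeff_X, coeff_C]

lemma sum_sq_le_sq_sum (T : Finset ℕ) (a : ℕ → ℝ) (h : ∀ j ∈ T, 0 ≤ a j) :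
    ∑ j ∈ T, a j ^ 2 ≤ (∑ j ∈ T, a j) ^ 2 := by
  calc ∑ j ∈ T, a j ^ 2 = ∑ j ∈ T, a j * a j := by simp [sq]
  _ ≤ ∑ j ∈ T, a j * ∑ i ∈ T, a i := Finset.sum_le_sum fun j hj =>
      mul_le_mul_of_nonneg_left (Finset.single_le_sum h hj) (h j hj)
  _ = (∑ j ∈ T, a j) ^ 2 := by rw [← Finset.sum_mul, sq]

lemma basis_bound (r : ℕ) (hr : 0 < r) (lam : Fin r → ℂ) (hlam : Function.Injective lam)
    (α β : ℝ)
    (hα : IsLeast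
      (Set.range fun s : Fin r => ∏ u ∈ Finset.univ.erase s, ‖ (lam s - lam u)‖ ^ 2) α)
    (hβ : IsGreatest (Set.range fun s : Fin r => ‖ (lam s)‖) β) (s : Fin r) :
    ∑ j ∈ Finset.range r, ‖
        ((∏ u ∈ Finset.univ.erase s, (C (lam s - lam u)⁻¹ * (X - C (lam u)))).coeff j)‖ ^ 2
      ≤ (1 / α) * (1 + β) ^ (2 * r) := by
  obtain ⟨s₁, hs₁⟩ := hβ.1
  have hβ0 : 0 ≤ β := hs₁ ▸ norm_nonneg _
  have hβ1 : (1:ℝ) ≤ 1 + β := by linarith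
  obtain ⟨s₀, hs₀⟩ := hα.1
  have hα0 : 0 < α := by
    rw [← hs₀]
    refine Finset.prod_pos fun u hu => ?_
    have hne : lam s₀ - lam u ≠ 0 :=
      sub_ne_zero.2 fun h => (Finset.mem_erase.1 hu).1 (hlam h).symm
    exact pow_pos (norm_pos_iff.mpr hne) 2
  set t := Finset.univ.erase s with ht
  have hcard : t.card = r - 1 := by
    rw [ht, Finset.card_erase_of_mem (Finset.mem_univ s), Finset.card_univ, Fintype.card_fin]
  set c : ℂ := ∏ u ∈ t, (lam s - lam u)⁻¹ with hc
  set Q : ℂ[X] := ∏ u ∈ t, (X - C (lam u)) with hQ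
  set P : ℝ[X] := ∏ u ∈ t, (X + C (‖ (lam u)‖)) with hP
  have hprod : ∏ u ∈ t, (C (lam s - lam u)⁻¹ * (X - C (lam u))) = C c * Q := by
    rw [Finset.prod_mul_distrib, hc, map_prod]
  have hcoeff : ∀ j, ‖ ((C c * Q).coeff j)‖ ≤ ‖c‖ * P.coeff j := by
    intro j
    rw [coeff_C_mul, norm_mul]
    exact mul_le_mul_of_nonneg_left (coeff_abs_prod_le t lam j) (norm_nonneg c)
  have hdegP : P.natDegree < r := by
    have h1 : P.natDegree ≤ ∑ u ∈ t, (X + C (‖ (lam u)‖)).natDegree :=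
      hP ▸ natDegree_prod_le t _
    simp only [natDegree_X_add_C, Finset.sum_const, smul_eq_mul, mul_one, hcard] at h1
    omega
  have hPsum : ∑ j ∈ Finset.range r, P.coeff j ≤ (1 + β) ^ r := by
    have heval : P.eval 1 = ∑ j ∈ Finset.range r, P.coeff j := by
      rw [eval_eq_sum_range' hdegP]
      simp
    rw [← heval, hP, eval_prod]
    calc ∏ u ∈ t, eval 1 (X + C (‖ (lam u)‖))
        ≤ ∏ u ∈ t, (1 + β) := by
          refine Finset.prod_le_prod (fun u _ => by simp only [eval_add, eval_X, eval_C]; positivity) fun u _ => ?_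
          simp only [eval_add, eval_X, eval_C]
          linarith [hβ.2 ⟨u, rfl⟩]
      _ = (1 + β) ^ t.card := by rw [Finset.prod_const]
      _ ≤ (1 + β) ^ r := pow_le_pow_right₀ hβ1 (by omega)
  have hsum1 : ∑ j ∈ Finset.range r, ‖ ((C c * Q).coeff j)‖
      ≤ ‖c‖ * (1 + β) ^ r := by
    calc ∑ j ∈ Finset.range r, ‖ ((C c * Q).coeff j)‖
        ≤ ∑ j ∈ Finset.range r, ‖c‖ * P.coeff j :=
          Finset.sum_le_sum fun j _ => hcoeff j
      _ = ‖c‖ * ∑ j ∈ Finset.range r, P.coeff j := by rw [Finset.mul_sum]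
      _ ≤ ‖c‖ * (1 + β) ^ r :=
          mul_le_mul_of_nonneg_left hPsum (norm_nonneg c)
  have hcsq : ‖c‖ ^ 2 ≤ 1 / α := by
    have hceq : ‖c‖ ^ 2 = (∏ u ∈ t, ‖ (lam s - lam u)‖ ^ 2)⁻¹ := by
      rw [hc, norm_prod]
      rw [← Finset.prod_pow, ← Finset.prod_inv_distrib]
      refine Finset.prod_congr rfl fun u _ => ?_
      rw [norm_inv, inv_pow]
    rw [hceq, one_div]
    exact inv_anti₀ hα0 (hα.2 ⟨s, rfl⟩)
  rw [hprod]
  calc ∑ j ∈ Finset.range r, ‖ ((C c * Q).coeff j)‖ ^ 2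
      ≤ (∑ j ∈ Finset.range r, ‖ ((C c * Q).coeff j)‖) ^ 2 :=
        sum_sq_le_sq_sum _ _ fun j _ => norm_nonneg _
    _ ≤ (‖c‖ * (1 + β) ^ r) ^ 2 :=
        pow_le_pow_left₀ (Finset.sum_nonneg fun j _ => norm_nonneg _) hsum1 2
    _ = ‖c‖ ^ 2 * (1 + β) ^ (2 * r) := by
        rw [mul_pow, ← pow_mul, mul_comm r 2]
    _ ≤ (1 / α) * (1 + β) ^ (2 * r) :=
        mul_le_mul_of_nonneg_right hcsq (by positivity)


set_option maxHeartbeats 2000000 in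
/-- For distinct `λ_1,…,λ_r` with `β = max_s |λ_s|` and
`α = min_s Π_{u≠s}|λ_s-λ_u|²`: each Lagrange basis polynomial
`B_s(z) = Π_{u≠s}(z-λ_u)/(λ_s-λ_u)` satisfies `‖B_s‖² ≤ (1/α)(1+β)^{2r}` in the
coefficient ℓ² norm, and consequently the Lagrange interpolation operator
`M : ℂ^{m×r} → P_k^m` (with `k ≥ r-1`) satisfies `‖M‖ ≤ (r/α)^{1/2}(1+β)^r`. -/
theorem stmt6 (r m k : ℕ) (hr : 0 < r) (hk : r - 1 ≤ k)
    (lam : Fin r → ℂ) (hlam : Function.Injective lam)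
    (α β : ℝ)
    (hα : IsLeast
      (Set.range fun s : Fin r => ∏ u ∈ Finset.univ.erase s, ‖lam s - lam u‖ ^ 2) α)
    (hβ : IsGreatest (Set.range fun s : Fin r => ‖lam s‖) β)
    (M : EuclideanSpace ℂ (Fin m × Fin r) →L[ℂ] EuclideanSpace ℂ (Fin m × Fin (k + 1)))
    (hM : ∀ (w : EuclideanSpace ℂ (Fin m × Fin r)) (i : Fin m) (j : Fin (k + 1)),
      M w (i, j) = ∑ s : Fin r, w (i, s) *
        (∏ u ∈ Finset.univ.erase s,
          (Polynomial.C (lam s - lam u)⁻¹ * (Polynomial.X - Polynomial.C (lam u)))).coeff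
            (j : ℕ)) :
    (∀ s : Fin r,
      ∑ j ∈ Finset.range r, ‖
          ((∏ u ∈ Finset.univ.erase s,
            (Polynomial.C (lam s - lam u)⁻¹ * (Polynomial.X - Polynomial.C (lam u)))).coeff j)‖ ^ 2
        ≤ (1 / α) * (1 + β) ^ (2 * r)) ∧
    ‖M‖ ≤ Real.sqrt (r / α) * (1 + β) ^ r := by
  have hpart1 := fun s => basis_bound r hr lam hlam α β hα hβ s
  refine ⟨hpart1, ?_⟩
  obtain ⟨s₁, hs₁⟩ := hβ.1
  have hβ0 : 0 ≤ β := hs₁ ▸ norm_nonneg _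
  obtain ⟨s₀, hs₀⟩ := hα.1
  have hα0 : 0 < α := by
    rw [← hs₀]
    refine Finset.prod_pos fun u hu => ?_
    have hne : lam s₀ - lam u ≠ 0 :=
      sub_ne_zero.2 fun h => (Finset.mem_erase.1 hu).1 (hlam h).symm
    exact pow_pos (norm_pos_iff.mpr hne) 2
  set B : Fin r → ℂ[X] :=
    fun s => ∏ u ∈ Finset.univ.erase s, (C (lam s - lam u)⁻¹ * (X - C (lam u))) with hB
  have hdeg : ∀ s : Fin r, (B s).natDegree < r := by
    intro s
    have h1 : (B s).natDegree ≤
        ∑ u ∈ Finset.univ.erase s, (C (lam s - lam u)⁻¹ * (X - C (lam u))).natDegree :=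
      natDegree_prod_le _ _
    have h2 : ∀ u ∈ Finset.univ.erase s,
        (C (lam s - lam u)⁻¹ * (X - C (lam u))).natDegree ≤ 1 := by
      intro u _
      refine (natDegree_mul_le).trans ?_
      simp [natDegree_X_sub_C]
    have h3 := (h1.trans (Finset.sum_le_card_nsmul _ _ 1 h2))
    have hcard : (Finset.univ.erase s).card = r - 1 := by
      rw [Finset.card_erase_of_mem (Finset.mem_univ s), Finset.card_univ, Fintype.card_fin]
    rw [hcard, smul_eq_mul, mul_one] at h3
    omega
  have hcoeff0 : ∀ (s : Fin r) (j : ℕ), r ≤ j → (B s).coeff j = 0 := fun s j hj =>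
    coeff_eq_zero_of_natDegree_lt (lt_of_lt_of_le (hdeg s) hj)
  have hsums : ∀ s : Fin r, ∑ j ∈ Finset.range (k + 1), ‖ ((B s).coeff j)‖ ^ 2
      ≤ (1 / α) * (1 + β) ^ (2 * r) := by
    intro s
    have hsub : Finset.range r ⊆ Finset.range (k + 1) := Finset.range_subset_range.2 (by omega)
    have heq : ∑ j ∈ Finset.range (k + 1), ‖ ((B s).coeff j)‖ ^ 2
        = ∑ j ∈ Finset.range r, ‖ ((B s).coeff j)‖ ^ 2 := by
      refine (Finset.sum_subset hsub fun j _ hj => ?_).symm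
      rw [hcoeff0 s j (by simpa using hj)]
      simp
    rw [heq]
    exact hpart1 s
  have hKnn : (0:ℝ) ≤ Real.sqrt (↑r / α) * (1 + β) ^ r := by positivity
  refine M.opNorm_le_bound hKnn fun w => ?_
  have hwsum : ‖w‖ ^ 2 = ∑ i : Fin m, ∑ s : Fin r, ‖ (w (i, s))‖ ^ 2 := by
    rw [EuclideanSpace.norm_eq, Real.sq_sqrt (by positivity)]
    rw [Fintype.sum_prod_type]
  have key : ∑ x : Fin m × Fin (k + 1), ‖M w x‖ ^ 2
      ≤ (↑r / α) * (1 + β) ^ (2 * r) * ‖w‖ ^ 2 := by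
    have step1 : ∀ (i : Fin m) (j : Fin (k + 1)), ‖M w (i, j)‖ ^ 2 ≤
        (∑ s : Fin r, ‖ (w (i, s))‖ ^ 2) *
          (∑ s : Fin r, ‖ ((B s).coeff (j : ℕ))‖ ^ 2) := by
      intro i j
      rw [hM w i j]
      calc ‖ (∑ s : Fin r, w (i, s) * (B s).coeff (j : ℕ))‖ ^ 2
          ≤ (∑ s : Fin r, ‖ (w (i, s))‖ * ‖ ((B s).coeff (j : ℕ))‖) ^ 2 := by
            refine pow_le_pow_left₀ (norm_nonneg _) ?_ 2
            refine (norm_sum_le _ _).trans_eq ?_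
            exact Finset.sum_congr rfl fun s _ => norm_mul _ _
        _ ≤ _ := Finset.sum_mul_sq_le_sq_mul_sq _ _ _
    calc ∑ x : Fin m × Fin (k + 1), ‖M w x‖ ^ 2
        = ∑ i : Fin m, ∑ j : Fin (k + 1), ‖M w (i, j)‖ ^ 2 := Fintype.sum_prod_type _
      _ ≤ ∑ i : Fin m, ∑ j : Fin (k + 1),
            (∑ s : Fin r, ‖ (w (i, s))‖ ^ 2) *
              (∑ s : Fin r, ‖ ((B s).coeff (j : ℕ))‖ ^ 2) :=
          Finset.sum_le_sum fun i _ => Finset.sum_le_sum fun j _ => step1 i j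
      _ = (∑ i : Fin m, ∑ s : Fin r, ‖ (w (i, s))‖ ^ 2) *
            (∑ j : Fin (k + 1), ∑ s : Fin r, ‖ ((B s).coeff (j : ℕ))‖ ^ 2) := by
          rw [Finset.sum_mul]
          exact Finset.sum_congr rfl fun i _ => (Finset.mul_sum _ _ _).symm
      _ ≤ ‖w‖ ^ 2 * ((↑r / α) * (1 + β) ^ (2 * r)) := by
          rw [hwsum]
          refine mul_le_mul_of_nonneg_left ?_ (Finset.sum_nonneg fun i _ =>
            Finset.sum_nonneg fun s _ => sq_nonneg _)
          rw [Finset.sum_comm]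
          calc ∑ s : Fin r, ∑ j : Fin (k + 1), ‖ ((B s).coeff (j : ℕ))‖ ^ 2
              = ∑ s : Fin r, ∑ j ∈ Finset.range (k + 1), ‖ ((B s).coeff j)‖ ^ 2 :=
                Finset.sum_congr rfl fun s _ =>
                  Fin.sum_univ_eq_sum_range (fun j => ‖ ((B s).coeff j)‖ ^ 2) (k + 1)
            _ ≤ ∑ _s : Fin r, (1 / α) * (1 + β) ^ (2 * r) :=
                Finset.sum_le_sum fun s _ => hsums s
            _ = (↑r / α) * (1 + β) ^ (2 * r) := by
                rw [Finset.sum_const, Finset.card_univ, Fintype.card_fin, nsmul_eq_mul]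
                ring
      _ = (↑r / α) * (1 + β) ^ (2 * r) * ‖w‖ ^ 2 := by ring
  have hMw : ‖M w‖ = Real.sqrt (∑ x : Fin m × Fin (k + 1), ‖M w x‖ ^ 2) := by
    rw [EuclideanSpace.norm_eq]
  have hrhs : (Real.sqrt (↑r / α) * (1 + β) ^ r * ‖w‖) ^ 2
      = (↑r / α) * (1 + β) ^ (2 * r) * ‖w‖ ^ 2 := by
    rw [mul_pow, mul_pow, Real.sq_sqrt (by positivity : (0:ℝ) ≤ ↑r / α), ← pow_mul,
      mul_comm r 2]
  rw [hMw]
  calc Real.sqrt (∑ x : Fin m × Fin (k + 1), ‖M w x‖ ^ 2)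
      ≤ Real.sqrt ((Real.sqrt (↑r / α) * (1 + β) ^ r * ‖w‖) ^ 2) :=
        Real.sqrt_le_sqrt (by rw [hrhs]; exact key)
    _ = Real.sqrt (↑r / α) * (1 + β) ^ r * ‖w‖ :=
        Real.sqrt_sq (by positivity)
end

section
/- Let V be a finitely generated shift-invariant subspace of L²(ℝ^d) and L : V → V a bounded, normal, shift-preserving operator. If Λ_a (with a of bounded spectrum) is an s-eigenvalue of L, i.e., V_a = ker(L - Λ_a) ≠ {0}, then Λ_a* = Λ_b (with b(j) = conj(a(-j))) is an s-eigenvalue of L* and ker(L* - Λ_b) = V_a. -/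
open MeasureTheory
open scoped FourierTransform InnerProductSpace

noncomputable section

/-- Euclidean space `ℝ^d`. -/
abbrev Rd (d : ℕ) : Type := EuclideanSpace ℝ (Fin d)

/-- The integer vector `k ∈ ℤ^d` viewed inside `ℝ^d`. -/
def intVec {d : ℕ} (k : Fin d → ℤ) : Rd d := WithLp.toLp 2 (fun i => (k i : ℝ))

/-- `ℓ²(ℤ^d)`. -/
abbrev l2Z (d : ℕ) : Type := lp (fun _ : Fin d → ℤ => ℂ) 2

/-- `L²(ℝ^d)`. -/
abbrev H2 (d : ℕ) : Type := Lp ℂ 2 (volume : Measure (Rd d))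

/-- Lebesgue measure restricted to the fundamental domain `[0,1)^d`. -/
def boxMeasure (d : ℕ) : Measure (Rd d) :=
  (volume : Measure (Rd d)).restrict {ω : Rd d | ∀ i, ω i ∈ Set.Ico (0 : ℝ) 1}

/-- The character `e_k(ω) = e^{-2πi⟨ω,k⟩}`. -/
def eChar {d : ℕ} (k : Fin d → ℤ) (ω : Rd d) : ℂ :=
  Complex.exp (-2 * Real.pi * Complex.I * (∑ i, (ω i : ℂ) * (k i : ℂ)))

/-- The fiberization setup on `L²(ℝ^d)`: the integer translation operators `Tr k`
and the fiberization isometric isomorphism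
`T : L²(ℝ^d) ≃ L²([0,1)^d, ℓ²(ℤ^d))`, `Tf(ω) = (f̂(ω+k))_k`,
together with its defining (Fourier) property and the modulation property. -/
structure Fiberization (d : ℕ) where
  Tr : (Fin d → ℤ) → (H2 d ≃ₗᵢ[ℂ] H2 d)
  hTr : ∀ (k : Fin d → ℤ) (f : H2 d),
    (Tr k f : Rd d → ℂ) =ᵐ[volume] fun x => f (x - intVec k)
  T : H2 d ≃ₗᵢ[ℂ] Lp (l2Z d) 2 (boxMeasure d)
  hT_four : ∀ (f : Rd d → ℂ) (hf1 : Integrable f (volume : Measure (Rd d)))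
      (hf2 : MemLp f 2 (volume : Measure (Rd d))),
    ∀ᵐ ω ∂(boxMeasure d), ∀ k : Fin d → ℤ,
      (T (hf2.toLp f) : Rd d → l2Z d) ω k = 𝓕 f (ω + intVec k)
  hT_mod : ∀ (k : Fin d → ℤ) (f : H2 d),
    ∀ᵐ ω ∂(boxMeasure d),
      (T (Tr k f) : Rd d → l2Z d) ω = eChar k ω • (T f : Rd d → l2Z d) ω


namespace Stmt13Aux

variable {d : ℕ}

lemma ae_comp_sub (v : Rd d) {g h : Rd d → ℂ} (hgh : g =ᵐ[volume] h) :
    (fun x => g (x - v)) =ᵐ[volume] (fun x => h (x - v)) :=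
  (measurePreserving_sub_right (volume : Measure (Rd d)) v).quasiMeasurePreserving.ae_eq_comp hgh

lemma intVec_add (j k : Fin d → ℤ) : intVec (j + k) = intVec j + intVec k := by
  ext i
  simp [intVec]

lemma Tr_comp (F : Fiberization d) (j k : Fin d → ℤ) (f : H2 d) :
    F.Tr j (F.Tr k f) = F.Tr (j + k) f := by
  apply Lp.ext
  have h1 := F.hTr j (F.Tr k f)
  have h2 := ae_comp_sub (intVec j) (F.hTr k f)
  have h3 := (F.hTr (j + k) f).symm
  refine (h1.trans (h2.trans ?_)).trans h3
  apply Filter.EventuallyEq.of_eq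
  funext x
  rw [intVec_add, sub_sub]

lemma Tr_zero (F : Fiberization d) (f : H2 d) : F.Tr 0 f = f := by
  apply Lp.ext
  have h1 := F.hTr 0 f
  have : intVec (0 : Fin d → ℤ) = 0 := by ext i; simp [intVec]
  simpa [this] using h1

lemma Tr_cancel (F : Fiberization d) (j : Fin d → ℤ) (f : H2 d) :
    F.Tr j (F.Tr (-j) f) = f := by
  rw [Tr_comp, add_neg_cancel, Tr_zero]

lemma Tr_swap (F : Fiberization d) (j k : Fin d → ℤ) (f : H2 d) :
    F.Tr j (F.Tr k f) = F.Tr k (F.Tr j f) := by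
  rw [Tr_comp, Tr_comp, add_comm]

lemma hasSum_coe_iff {V : Submodule ℂ (H2 d)} {ι : Type} (g : ι → V) (v : V) :
    HasSum g v ↔ HasSum (fun i => (g i : H2 d)) (v : H2 d) := by
  have h : Topology.IsInducing (⇑V.subtype) := ⟨rfl⟩
  exact (h.hasSum_iff g v).symm

end Stmt13Aux

open Stmt13Aux

set_option maxHeartbeats 4000000 in
set_option synthInstance.maxHeartbeats 400000 in
/-- Let `V` be a finitely generated shift-invariant subspace of `L²(ℝ^d)`
and `L : V → V` a bounded, normal, shift-preserving operator.  If `Λ_a` (with `a` of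
bounded spectrum) is an s-eigenvalue of `L`, i.e. `V_a = ker(L - Λ_a) ≠ {0}`, then
`Λ_a* = Λ_b` (with `b(j) = conj(a(-j))`) is an s-eigenvalue of `L*` and
`ker(L* - Λ_b) = V_a`. -/
theorem stmt13 (d : ℕ) (F : Fiberization d)
    (V : Submodule ℂ (H2 d)) [CompleteSpace V]
    (hVinv : ∀ (k : Fin d → ℤ) (f : H2 d), f ∈ V → F.Tr k f ∈ V)
    (hVgen : ∃ (N : ℕ) (φ : Fin N → H2 d), V = (Submodule.span ℂ
      (Set.range fun p : Fin N × (Fin d → ℤ) => F.Tr p.2 (φ p.1))).topologicalClosure)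
    (L : V →L[ℂ] V) (hnormal : IsStarNormal L)
    (hLsp : ∀ (k : Fin d → ℤ) (f g : V), (g : H2 d) = F.Tr k (f : H2 d) →
      ((L g : V) : H2 d) = F.Tr k ((L f : V) : H2 d))
    (a : (Fin d → ℤ) → ℂ) (ha2 : Memℓp a 2)
    (hbdd : ∃ C : ℝ, ∀ᵐ ω ∂(volume : Measure (Rd d)),
      ‖∑' j : Fin d → ℤ, a j * eChar j ω‖ ≤ C)
    (La : H2 d →L[ℂ] H2 d)
    (hLa : ∀ f : H2 d, HasSum (fun j : Fin d → ℤ => a j • F.Tr j f) (La f))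
    (LaV : V →L[ℂ] V) (hLaV : ∀ f : V, ((LaV f : V) : H2 d) = La (f : H2 d))
    (hseig : LinearMap.ker ((L - LaV : V →L[ℂ] V) : V →ₗ[ℂ] V) ≠ ⊥)
    (Lb : H2 d →L[ℂ] H2 d)
    (hLb : ∀ f : H2 d,
      HasSum (fun j : Fin d → ℤ => (starRingEnd ℂ) (a (-j)) • F.Tr j f) (Lb f))
    (LbV : V →L[ℂ] V) (hLbV : ∀ f : V, ((LbV f : V) : H2 d) = Lb (f : H2 d)) :
    LinearMap.ker ((ContinuousLinearMap.adjoint L - LbV : V →L[ℂ] V) : V →ₗ[ℂ] V) =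
      LinearMap.ker ((L - LaV : V →L[ℂ] V) : V →ₗ[ℂ] V) ∧
      LinearMap.ker ((ContinuousLinearMap.adjoint L - LbV : V →L[ℂ] V) : V →ₗ[ℂ] V) ≠ ⊥ := by
  classical
  -- translations as maps V → V
  set TrV : (Fin d → ℤ) → V → V := fun k f => ⟨F.Tr k (f : H2 d), hVinv k _ f.2⟩ with hTrVdef
  have hTrV_coe : ∀ (k : Fin d → ℤ) (f : V), ((TrV k f : V) : H2 d) = F.Tr k (f : H2 d) :=
    fun _ _ => rfl
  -- sums in V
  have hSumA : ∀ f : V, HasSum (fun j : Fin d → ℤ => a j • TrV j f) (LaV f) := by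
    intro f
    rw [hasSum_coe_iff]
    have := hLa (f : H2 d)
    rw [← hLaV] at this
    simpa using this
  have hSumB : ∀ f : V,
      HasSum (fun j : Fin d → ℤ => (starRingEnd ℂ) (a (-j)) • TrV j f) (LbV f) := by
    intro f
    rw [hasSum_coe_iff]
    have := hLb (f : H2 d)
    rw [← hLbV] at this
    simpa using this
  -- L commutes with TrV
  have hLTr : ∀ (k : Fin d → ℤ) (f : V), L (TrV k f) = TrV k (L f) := by
    intro k f
    apply Subtype.ext
    exact hLsp k f (TrV k f) rfl
  -- LbV commutes with TrV
  have hLbTr : ∀ (k : Fin d → ℤ) (f : V), LbV (TrV k f) = TrV k (LbV f) := by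
    intro k f
    apply Subtype.ext
    rw [hLbV, hTrV_coe, hTrV_coe, hLbV]
    have h1 := hLb (F.Tr k (f : H2 d))
    have h2 := ((hLb (f : H2 d)).mapL
      (F.Tr k).toLinearIsometry.toContinuousLinearMap)
    simp only [LinearIsometry.coe_toContinuousLinearMap,
      LinearIsometryEquiv.coe_toLinearIsometry, _root_.map_smul] at h2
    simp_rw [Tr_swap F k] at h2
    exact h1.unique h2
  -- LaV commutes with TrV
  have hLaTr : ∀ (k : Fin d → ℤ) (f : V), LaV (TrV k f) = TrV k (LaV f) := by
    intro k f
    apply Subtype.ext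
    rw [hLaV, hTrV_coe, hTrV_coe, hLaV]
    have h1 := hLa (F.Tr k (f : H2 d))
    have h2 := ((hLa (f : H2 d)).mapL
      (F.Tr k).toLinearIsometry.toContinuousLinearMap)
    simp only [LinearIsometry.coe_toContinuousLinearMap,
      LinearIsometryEquiv.coe_toLinearIsometry, _root_.map_smul] at h2
    simp_rw [Tr_swap F k] at h2
    exact h1.unique h2
  -- general commuting lemmas
  have commA : ∀ (M : V →L[ℂ] V), (∀ k f, M (TrV k f) = TrV k (M f)) →
      ∀ f, M (LaV f) = LaV (M f) := by
    intro M hM f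
    have h1 : HasSum (fun j : Fin d → ℤ => a j • TrV j (M f)) (M (LaV f)) := by
      have := (hSumA f).mapL M
      simpa [_root_.map_smul, hM] using this
    exact h1.unique (hSumA (M f))
  have commB : ∀ (M : V →L[ℂ] V), (∀ k f, M (TrV k f) = TrV k (M f)) →
      ∀ f, M (LbV f) = LbV (M f) := by
    intro M hM f
    have h1 : HasSum (fun j : Fin d → ℤ => (starRingEnd ℂ) (a (-j)) • TrV j (M f))
        (M (LbV f)) := by
      have := (hSumB f).mapL M
      simpa [_root_.map_smul, hM] using this
    exact h1.unique (hSumB (M f))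
  -- inner product shift identity
  have key : ∀ (j : Fin d → ℤ) (x y : V), ⟪TrV j x, y⟫_ℂ = ⟪x, TrV (-j) y⟫_ℂ := by
    intro j x y
    rw [Submodule.coe_inner, Submodule.coe_inner, hTrV_coe, hTrV_coe]
    conv_lhs => rw [show (y : H2 d) = F.Tr j (F.Tr (-j) (y : H2 d)) from (Tr_cancel F j _).symm]
    rw [(F.Tr j).inner_map_map]
  -- LbV is the adjoint of LaV
  have hinner : ∀ x y : V, ⟪LbV x, y⟫_ℂ = ⟪x, LaV y⟫_ℂ := by
    intro x y
    have hy : HasSum (fun j : Fin d → ℤ => a j * ⟪x, TrV j y⟫_ℂ) ⟪x, LaV y⟫_ℂ := by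
      have := (hSumA y).mapL (innerSL ℂ x)
      simpa [inner_smul_right] using this
    have hx : HasSum (fun j : Fin d → ℤ => (starRingEnd ℂ) (a (-j)) * ⟪y, TrV j x⟫_ℂ)
        ⟪y, LbV x⟫_ℂ := by
      have := (hSumB x).mapL (innerSL ℂ y)
      simpa [inner_smul_right] using this
    have hx2 : HasSum (fun j : Fin d → ℤ => a (-j) * ⟪x, TrV (-j) y⟫_ℂ)
        ⟪LbV x, y⟫_ℂ := by
      have h := hx.map (starRingEnd ℂ) RCLike.continuous_conj
      have e1 : ((starRingEnd ℂ) ∘ fun j : Fin d → ℤ =>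
          (starRingEnd ℂ) (a (-j)) * ⟪y, TrV j x⟫_ℂ)
          = fun j : Fin d → ℤ => a (-j) * ⟪x, TrV (-j) y⟫_ℂ := by
        funext j
        rw [Function.comp_apply, map_mul, Complex.conj_conj]
        exact congrArg _ ((inner_conj_symm (TrV j x) y).trans (key j x y))
      rw [e1] at h
      exact (inner_conj_symm (𝕜 := ℂ) (LbV x) y) ▸ h
    have hx3 : HasSum (fun j : Fin d → ℤ => a j * ⟪x, TrV j y⟫_ℂ) ⟪LbV x, y⟫_ℂ := by
      refine ((Equiv.neg (Fin d → ℤ)).hasSum_iff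
        (f := fun j : Fin d → ℤ => a j * ⟪x, TrV j y⟫_ℂ) (a := ⟪LbV x, y⟫_ℂ)).mp ?_
      simpa [Function.comp_def] using hx2
    exact hx3.unique hy
  have hadj : LbV = ContinuousLinearMap.adjoint LaV :=
    (ContinuousLinearMap.eq_adjoint_iff LbV LaV).mpr hinner
  -- commutation equalities in the ring V →L[ℂ] V
  have cLb : L * LbV = LbV * L := by
    refine ContinuousLinearMap.ext fun f => ?_
    rw [ContinuousLinearMap.mul_apply, ContinuousLinearMap.mul_apply]
    exact commB L hLTr f
  have cab : LbV * LaV = LaV * LbV := by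
    refine ContinuousLinearMap.ext fun f => ?_
    rw [ContinuousLinearMap.mul_apply, ContinuousLinearMap.mul_apply]
    exact commA LbV hLbTr f
  -- the adjoint of L also commutes with the translations
  have hLadjTr : ∀ (k : Fin d → ℤ) (f : V),
      (ContinuousLinearMap.adjoint L) (TrV k f) = TrV k ((ContinuousLinearMap.adjoint L) f) := by
    intro k f
    refine ext_inner_right ℂ fun g => ?_
    rw [ContinuousLinearMap.adjoint_inner_left, key k f (L g), key k _ g,
      ContinuousLinearMap.adjoint_inner_left, hLTr (-k) g]
  have cadjL : ContinuousLinearMap.adjoint L * LaV = LaV * ContinuousLinearMap.adjoint L := by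
    refine ContinuousLinearMap.ext fun f => ?_
    rw [ContinuousLinearMap.mul_apply, ContinuousLinearMap.mul_apply]
    exact commA _ hLadjTr f
  have cLL : ContinuousLinearMap.adjoint L * L = L * ContinuousLinearMap.adjoint L := by
    have := hnormal.star_comm_self
    rwa [Commute, SemiconjBy, ContinuousLinearMap.star_eq_adjoint] at this
  -- adjoint of L - LaV
  have hadjS : ContinuousLinearMap.adjoint L - LbV = ContinuousLinearMap.adjoint (L - LaV) := by
    rw [ContinuousLinearMap.eq_adjoint_iff]
    intro x y
    simp only [ContinuousLinearMap.sub_apply, inner_sub_left, inner_sub_right,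
      ContinuousLinearMap.adjoint_inner_left, hinner x y]
  -- normality of L - LaV
  have hnorm2 : IsStarNormal (L - LaV) := by
    constructor
    rw [Commute, SemiconjBy, ContinuousLinearMap.star_eq_adjoint, ← hadjS]
    rw [sub_mul, sub_mul, mul_sub, mul_sub, mul_sub, mul_sub, cLL, cadjL, cLb, cab]
    abel
  -- kernel of a normal operator equals kernel of its adjoint
  have kerlem : ∀ (x : V), (L - LaV) x = 0 ↔ (ContinuousLinearMap.adjoint (L - LaV)) x = 0 := by
    intro x
    set S := L - LaV with hS
    have hc : ∀ y : V, S (ContinuousLinearMap.adjoint S y)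
        = ContinuousLinearMap.adjoint S (S y) := by
      intro y
      have := hnorm2.star_comm_self
      rw [Commute, SemiconjBy, ContinuousLinearMap.star_eq_adjoint] at this
      calc S (ContinuousLinearMap.adjoint S y) = (S * ContinuousLinearMap.adjoint S) y := rfl
        _ = (ContinuousLinearMap.adjoint S * S) y := by rw [this]
        _ = ContinuousLinearMap.adjoint S (S y) := rfl
    have hnorm_eq : ∀ y : V, ⟪S y, S y⟫_ℂ = ⟪ContinuousLinearMap.adjoint S y,
        ContinuousLinearMap.adjoint S y⟫_ℂ := by
      intro y
      rw [← ContinuousLinearMap.adjoint_inner_right S y (S y), ← hc y,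
        ← ContinuousLinearMap.adjoint_inner_left S (ContinuousLinearMap.adjoint S y) y]
    constructor
    · intro h
      have := hnorm_eq x
      rw [h] at this
      simp only [inner_zero_left] at this
      exact inner_self_eq_zero.mp this.symm
    · intro h
      have := hnorm_eq x
      rw [h] at this
      simp only [inner_zero_left] at this
      exact inner_self_eq_zero.mp this
  have hker : LinearMap.ker ((ContinuousLinearMap.adjoint L - LbV : V →L[ℂ] V) : V →ₗ[ℂ] V) =
      LinearMap.ker ((L - LaV : V →L[ℂ] V) : V →ₗ[ℂ] V) := by
    rw [hadjS]
    ext x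
    rw [LinearMap.mem_ker, LinearMap.mem_ker]
    exact ((kerlem x).symm : _)
  exact ⟨hker, hker ▸ hseig⟩


end
end

section
/- Let V ⊆ L²(ℝ^d) be a shift-invariant space with measurable range function J, and let P_V denote the orthogonal projection of L²(ℝ^d) onto V. Then for every f ∈ L²(ℝ^d), T(P_V f)(ω) = P_{J(ω)}(Tf(ω)) for almost every ω ∈ [0,1)^d, where P_{J(ω)} is the orthogonal projection of ℓ²(ℤ^d) onto J(ω). -/
open MeasureTheory
open scoped FourierTransform InnerProductSpace

noncomputable section

/-- Weak measurability of the projections implies strong measurability, at a fixed vector. -/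
lemma smProjConst {d : ℕ} (J : Rd d → Submodule ℂ (l2Z d)) [∀ ω, CompleteSpace (J ω)]
    (hJmeas : ∀ u v : l2Z d,
      Measurable fun ω : Rd d => ⟪((Submodule.orthogonalProjection (J ω) u : J ω) : l2Z d), v⟫_ℂ)
    (c : l2Z d) :
    StronglyMeasurable (fun ω => ((Submodule.orthogonalProjection (J ω) c : J ω) : l2Z d)) := by
  classical
  set P : Rd d → l2Z d := fun ω => ((Submodule.orthogonalProjection (J ω) c : J ω) : l2Z d) with hP
  have hcoef : ∀ k : Fin d → ℤ, Measurable fun ω => (P ω : (Fin d → ℤ) → ℂ) k := by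
    intro k
    have h1 : ∀ ω, (P ω : (Fin d → ℤ) → ℂ) k
        = (starRingEnd ℂ) ⟪P ω, lp.single 2 k (1 : ℂ)⟫_ℂ := by
      intro ω
      rw [lp.inner_single_right]
      simp
    simp only [h1]
    exact Complex.continuous_conj.measurable.comp (hJmeas c (lp.single 2 k (1 : ℂ)))
  have hSM : ∀ F : Finset (Fin d → ℤ),
      StronglyMeasurable (fun ω => ∑ k ∈ F, lp.single (E := fun _ : Fin d → ℤ => ℂ) 2 k
        ((P ω : (Fin d → ℤ) → ℂ) k)) := by
    intro F
    apply Finset.stronglyMeasurable_fun_sum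
    intro k _
    have : ∀ ω, lp.single (E := fun _ : Fin d → ℤ => ℂ) 2 k ((P ω : (Fin d → ℤ) → ℂ) k)
        = ((P ω : (Fin d → ℤ) → ℂ) k) • lp.single 2 k (1 : ℂ) := by
      intro ω
      rw [← lp.single_smul]
      norm_num
    simp only [this]
    exact ((hcoef k).stronglyMeasurable).smul stronglyMeasurable_const
  refine stronglyMeasurable_of_tendsto (Filter.atTop : Filter (Finset (Fin d → ℤ))) hSM ?_
  rw [tendsto_pi_nhds]
  intro ω
  exact (lp.hasSum_single (by norm_num) (P ω))

/-- Weak measurability of the projections, composed with a strongly measurable function. -/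
lemma smProjComp {d : ℕ} (J : Rd d → Submodule ℂ (l2Z d)) [∀ ω, CompleteSpace (J ω)]
    (hJmeas : ∀ u v : l2Z d,
      Measurable fun ω : Rd d => ⟪((Submodule.orthogonalProjection (J ω) u : J ω) : l2Z d), v⟫_ℂ)
    {H : Rd d → l2Z d} (Hsm : StronglyMeasurable H) :
    StronglyMeasurable (fun ω => ((Submodule.orthogonalProjection (J ω) (H ω) : J ω) : l2Z d)) := by
  classical
  have hsimple : ∀ s : SimpleFunc (Rd d) (l2Z d),
      StronglyMeasurable (fun ω => ((Submodule.orthogonalProjection (J ω) (s ω) : J ω) : l2Z d)) := by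
    intro s
    induction s using SimpleFunc.induction with
    | @const c S hS =>
      have : (fun ω => ((Submodule.orthogonalProjection (J ω)
            ((SimpleFunc.piecewise S hS (SimpleFunc.const _ c) (SimpleFunc.const _ 0)) ω) : J ω)
              : l2Z d))
          = fun ω => if ω ∈ S then ((Submodule.orthogonalProjection (J ω) c : J ω) : l2Z d) else 0 := by
        funext ω
        by_cases h : ω ∈ S <;> simp [SimpleFunc.piecewise_apply, h]
      rw [this]
      exact StronglyMeasurable.ite hS (smProjConst J hJmeas c) stronglyMeasurable_const
    | @add f g _ hf hg =>
      have : (fun ω => ((Submodule.orthogonalProjection (J ω) ((f + g) ω) : J ω) : l2Z d))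
          = fun ω => ((Submodule.orthogonalProjection (J ω) (f ω) : J ω) : l2Z d)
              + ((Submodule.orthogonalProjection (J ω) (g ω) : J ω) : l2Z d) := by
        funext ω
        simp
      rw [this]
      exact hf.add hg
  refine stronglyMeasurable_of_tendsto (Filter.atTop : Filter ℕ)
    (fun n => hsimple (Hsm.approx n)) ?_
  rw [tendsto_pi_nhds]
  intro ω
  have hcont : Continuous fun x : l2Z d => ((Submodule.orthogonalProjection (J ω) x : J ω) : l2Z d) :=
    continuous_subtype_val.comp (Submodule.orthogonalProjection (J ω)).continuous
  exact (hcont.tendsto (H ω)).comp (Hsm.tendsto_approx ω)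


open scoped InnerProductSpace in
/-- Helson's lemma. Let `V ⊆ L²(ℝ^d)` be a shift-invariant space with
measurable range function `J` and `P_V` the orthogonal projection onto `V`.  Then for every
`f ∈ L²(ℝ^d)`, `𝒯(P_V f)(ω) = P_{J(ω)}(𝒯f(ω))` for a.e. `ω ∈ [0,1)^d`. -/
theorem stmt19 (d : ℕ) (F : Fiberization d)
    (J : Rd d → Submodule ℂ (l2Z d)) [∀ ω, CompleteSpace (J ω)]
    (hJmeas : ∀ u v : l2Z d,
      Measurable fun ω : Rd d => ⟪((Submodule.orthogonalProjection (J ω) u : J ω) : l2Z d), v⟫_ℂ)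
    (V : Submodule ℂ (H2 d)) [CompleteSpace V]
    (hVinv : ∀ (k : Fin d → ℤ) (f : H2 d), f ∈ V → F.Tr k f ∈ V)
    (hVJ : ∀ f : H2 d, f ∈ V ↔ ∀ᵐ ω ∂(boxMeasure d), (F.T f : Rd d → l2Z d) ω ∈ J ω) :
    ∀ f : H2 d, ∀ᵐ ω ∂(boxMeasure d),
      (F.T (((Submodule.orthogonalProjection V f : V) : H2 d)) : Rd d → l2Z d) ω
        = ((Submodule.orthogonalProjection (J ω) ((F.T f : Rd d → l2Z d) ω) : J ω) : l2Z d) := by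
  intro f
  classical
  set g : H2 d := ((Submodule.orthogonalProjection V f : V) : H2 d) with hg
  set Th : Lp (l2Z d) 2 (boxMeasure d) := F.T (f - g) with hTh
  have hsm := (Lp.aestronglyMeasurable Th)
  set H : Rd d → l2Z d := hsm.mk _ with hH
  have Hsm : StronglyMeasurable H := hsm.stronglyMeasurable_mk
  have Hae : (Th : Rd d → l2Z d) =ᵐ[boxMeasure d] H := hsm.ae_eq_mk
  set W : Rd d → l2Z d := fun ω => ((Submodule.orthogonalProjection (J ω) (H ω) : J ω) : l2Z d) with hWdef
  have Wsm : StronglyMeasurable W := smProjComp J hJmeas Hsm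
  have Hmem : MemLp H 2 (boxMeasure d) := (Lp.memLp Th).ae_eq Hae
  have Wmem : MemLp W 2 (boxMeasure d) := by
    refine MemLp.of_le Hmem Wsm.aestronglyMeasurable (Filter.Eventually.of_forall fun ω => ?_)
    calc ‖W ω‖ = ‖Submodule.orthogonalProjection (J ω) (H ω)‖ := rfl
      _ ≤ ‖Submodule.orthogonalProjection (J ω)‖ * ‖H ω‖ := ContinuousLinearMap.le_opNorm _ _
      _ ≤ 1 * ‖H ω‖ := by
          have h1 := Submodule.orthogonalProjectionOnto_norm_le (J ω)
          have h2 : (0:ℝ) ≤ ‖H ω‖ := norm_nonneg _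
          nlinarith
      _ = ‖H ω‖ := one_mul _
  set w : Lp (l2Z d) 2 (boxMeasure d) := Wmem.toLp W with hwdef
  have wcoe : (w : Rd d → l2Z d) =ᵐ[boxMeasure d] W := Wmem.coeFn_toLp
  set g' : H2 d := F.T.symm w with hg'
  have hTg' : F.T g' = w := F.T.apply_symm_apply w
  have hg'V : g' ∈ V := by
    rw [hVJ, hTg']
    filter_upwards [wcoe] with ω hω
    rw [hω]
    exact SetLike.coe_mem _
  have hperp : ⟪(f - g : H2 d), g'⟫_ℂ = 0 := by
    have hfo : f - g ∈ Vᗮ := Submodule.sub_starProjection_mem_orthogonal (K := V) f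
    exact (Submodule.mem_orthogonal' V (f - g)).1 hfo g' hg'V
  have hww : ⟪Th, w⟫_ℂ = 0 := by
    calc ⟪Th, w⟫_ℂ = ⟪F.T (f - g), F.T g'⟫_ℂ := by rw [hTg']
      _ = ⟪f - g, g'⟫_ℂ := F.T.inner_map_map _ _
      _ = 0 := hperp
  have hinner_eq : ⟪w, w⟫_ℂ = ⟪Th, w⟫_ℂ := by
    rw [L2.inner_def, L2.inner_def]
    refine integral_congr_ae ?_
    filter_upwards [wcoe, Hae] with ω h1 h2
    rw [h1, h2]
    have horth : ⟪H ω - W ω, W ω⟫_ℂ = 0 := by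
      have hmem : H ω - W ω ∈ (J ω)ᗮ :=
        Submodule.sub_starProjection_mem_orthogonal (K := J ω) (H ω)
      exact (Submodule.mem_orthogonal' _ _).1 hmem (W ω) (SetLike.coe_mem _)
    rw [inner_sub_left, sub_eq_zero] at horth
    exact horth.symm
  have hw0 : w = 0 := inner_self_eq_zero.mp (hinner_eq.trans hww)
  have hW0 : W =ᵐ[boxMeasure d] 0 := by
    refine wcoe.symm.trans ?_
    rw [hw0]
    exact Lp.coeFn_zero _ _ _
  have hTgJ : ∀ᵐ ω ∂(boxMeasure d), (F.T g : Rd d → l2Z d) ω ∈ J ω :=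
    (hVJ g).1 (SetLike.coe_mem _)
  have hsub : (Th : Rd d → l2Z d) =ᵐ[boxMeasure d]
      fun ω => (F.T f : Rd d → l2Z d) ω - (F.T g : Rd d → l2Z d) ω := by
    have heq : Th = F.T f - F.T g := by rw [hTh, map_sub]
    rw [heq]
    exact Lp.coeFn_sub _ _
  filter_upwards [hTgJ, hsub, Hae, hW0] with ω h1 h2 h3 h4
  have hHperp : H ω ∈ (J ω)ᗮ := by
    have hz : ((Submodule.orthogonalProjection (J ω) (H ω) : J ω) : l2Z d) = 0 := h4
    have hz' : (Submodule.orthogonalProjection (J ω) (H ω) : J ω) = 0 :=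
      ZeroMemClass.coe_eq_zero.mp hz
    exact Submodule.orthogonalProjectionOnto_eq_zero_iff.mp hz'
  have hdiff : (F.T f : Rd d → l2Z d) ω - (F.T g : Rd d → l2Z d) ω ∈ (J ω)ᗮ := by
    rw [← h2, h3]
    exact hHperp
  exact (Submodule.eq_starProjection_of_mem_orthogonal h1 hdiff).symm


end
end
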